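/- Let G be a group, K a subgroup of G, and T ⊆ G a set of left coset representatives of K in G (i.e., the map T × K → G, (t,k) ↦ tk, is a bijection). Let S ⊆ G be a subset whose normal closure N = ⟪S⟫^G in G is contained in K. Then N equals the normal closure in K of the set {t⁻¹ s t : s ∈ S, t ∈ T}, i.e., N is the subgroup generated by all elements k⁻¹ t⁻¹ s t k with s ∈ S, t ∈ T, k ∈ K. -/

import Mathlib

/-- If `T` is a set of left coset representatives of a subgroup `K ≤ G` and `S ⊆ G` has
normal closure `N = ⟪S⟫^G` contained in `K`, then `N` is the normal closure in `K` of
`{s^t : s ∈ S, t ∈ T}`, i.e. `N` is generated by the elements `(s^t)^k`,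
`s ∈ S`, `t ∈ T`, `k ∈ K`. -/
theorem normalClosure_eq_closure_conjugates_of_le
    {G : Type*} [Group G] (K : Subgroup G) (T : Set G)
    (hT : Function.Bijective (fun x : T × K => (x.1 : G) * (x.2 : G)))
    (S : Set G) (hS : Subgroup.normalClosure S ≤ K) :
    Subgroup.normalClosure S =
      Subgroup.closure
        {x : G | ∃ s ∈ S, ∃ t ∈ T, ∃ k ∈ K, x = k⁻¹ * (t⁻¹ * s * t) * k} := by
  apply le_antisymm
  · rw [Subgroup.normalClosure]
    apply (Subgroup.closure_le _).2
    intro a ha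
    rw [Group.mem_conjugatesOfSet_iff] at ha
    obtain ⟨s, hs, c, hc⟩ := ha
    obtain ⟨⟨t, k⟩, htk⟩ := hT.2 c⁻¹
    simp only at htk
    apply Subgroup.subset_closure
    refine ⟨s, hs, t, t.2, k, k.2, ?_⟩
    have hc' : (c : G) * s * ((c : G))⁻¹ = a := by rw [hc.eq, mul_inv_cancel_right]
    have h2 : ((t : G) * (k : G))⁻¹ = (c : G) := by rw [htk, inv_inv]
    rw [← hc', ← htk, ← h2]
    group
  · apply (Subgroup.closure_le _).2
    rintro a ⟨s, hs, t, _, k, _, rfl⟩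
    have h := (Subgroup.normalClosure_normal (s := S)).conj_mem s
      (Subgroup.subset_normalClosure hs) (t * k)⁻¹
    convert h using 1
    group
    exact Iff.rfl
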